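/- Let n ≥ 2, 0 < α ≤ β, let f_1, …, f_n : ℝ → ℝ and g : ℝ → ℝ each belong to the class F(α,β). Then for every x ∈ ℝⁿ with x_i ≥ 0 for all i and ∑_{i=1}^n x_i = n, the expected change of the total cost under a replacement (departure of a uniformly chosen agent followed by the arrival of a new agent with cost g and initial estimate 1) satisfies (1/n)·∑_{ℓ=1}^n ( ∑_{i ≠ ℓ} f_i( (1 − 1/n)·x_i + (1/n)·x_ℓ ) + g(1) ) − ∑_{i=1}^n f_i(x_i) ≤ (5/2)β − (3/2)α. -/

import Mathlib

/-- The class `F(α,β)`: differentiable, `α`-strongly convex (`x ↦ f x - (α/2)x²`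
is convex), `β`-smooth (the derivative is `β`-Lipschitz), with `f(0) = 0` and
`f'(0) = 0`. -/
def MemF (α β : ℝ) (f : ℝ → ℝ) : Prop :=
  Differentiable ℝ f ∧
  ConvexOn ℝ Set.univ (fun x => f x - α / 2 * x ^ 2) ∧
  (∀ x y : ℝ, |deriv f x - deriv f y| ≤ β * |x - y|) ∧
  f 0 = 0 ∧ deriv f 0 = 0

/-- Subgradient inequality for a differentiable convex function on `ℝ`. -/
lemma aux_subgrad {h : ℝ → ℝ} (hc : ConvexOn ℝ Set.univ h) (hd : Differentiable ℝ h)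
    (a b : ℝ) : h a + deriv h a * (b - a) ≤ h b := by
  rcases lt_trichotomy a b with hab | rfl | hba
  · have h1 := hc.deriv_le_slope (Set.mem_univ a) (Set.mem_univ b) hab (hd a)
    rw [slope_def_field, le_div_iff₀ (by linarith)] at h1
    linarith
  · simp
  · have h1 := hc.slope_le_deriv (Set.mem_univ b) (Set.mem_univ a) hba (hd a)
    rw [slope_def_field, div_le_iff₀ (by linarith : (0:ℝ) < a - b)] at h1
    linarith

lemma aux_quad (c x : ℝ) : HasDerivAt (fun y : ℝ => c * y ^ 2) (c * (2 * x)) x := by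
  simpa using (hasDerivAt_pow 2 x).const_mul c

lemma MemF.strong {α β : ℝ} {f : ℝ → ℝ} (hf : MemF α β f) (a b : ℝ) :
    f a + deriv f a * (b - a) + α / 2 * (b - a) ^ 2 ≤ f b := by
  obtain ⟨hd, hc, -, -, -⟩ := hf
  have hq : ∀ y : ℝ, HasDerivAt (fun z : ℝ => α / 2 * z ^ 2) (α / 2 * (2 * y)) y :=
    fun y => aux_quad _ y
  have hφd : Differentiable ℝ (fun z => f z - α / 2 * z ^ 2) :=
    hd.sub fun y => (hq y).differentiableAt
  have hφ' : ∀ y : ℝ, deriv (fun z => f z - α / 2 * z ^ 2) y = deriv f y - α / 2 * (2 * y) :=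
    fun y => ((hd y).hasDerivAt.sub (hq y)).deriv
  have h1 := aux_subgrad hc hφd a b
  simp only [hφ'] at h1
  nlinarith [h1]

lemma MemF.smooth {α β : ℝ} {f : ℝ → ℝ} (hf : MemF α β f) (a b : ℝ) :
    f b ≤ f a + deriv f a * (b - a) + β / 2 * (b - a) ^ 2 := by
  obtain ⟨hd, -, hlip, -, -⟩ := hf
  have hq : ∀ y : ℝ, HasDerivAt (fun z : ℝ => β / 2 * z ^ 2) (β / 2 * (2 * y)) y :=
    fun y => aux_quad _ y
  have hψd : Differentiable ℝ (fun z => β / 2 * z ^ 2 - f z) :=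
    Differentiable.sub (fun y => (hq y).differentiableAt) hd
  have hψ' : ∀ y : ℝ, deriv (fun z => β / 2 * z ^ 2 - f z) y = β / 2 * (2 * y) - deriv f y :=
    fun y => ((hq y).sub (hd y).hasDerivAt).deriv
  have hmono : Monotone (deriv (fun z => β / 2 * z ^ 2 - f z)) := by
    intro u v huv
    rw [hψ' u, hψ' v]
    have h2 := (abs_le.mp (hlip v u)).2
    have h3 : |v - u| = v - u := abs_of_nonneg (by linarith)
    rw [h3] at h2
    linarith
  have hconv : ConvexOn ℝ Set.univ (fun z => β / 2 * z ^ 2 - f z) :=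
    Monotone.convexOn_univ_of_deriv hψd hmono
  have h1 := aux_subgrad hconv hψd a b
  simp only [hψ'] at h1
  nlinarith [h1]

set_option maxHeartbeats 1000000 in
/-- For local costs in `F(α,β)` and feasible `x ∈ Sₙ`, the
expected change of the total cost under a replacement (uniform departure plus
arrival of a new agent with cost `g` and initial estimate `1`) is at most
`(5/2)β - (3/2)α`. -/
theorem stmt_12 (n : ℕ) (hn : 2 ≤ n) (α β : ℝ) (hα : 0 < α) (hαβ : α ≤ β)
    (f : Fin n → ℝ → ℝ) (hf : ∀ i, MemF α β (f i))
    (g : ℝ → ℝ) (hg : MemF α β g)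
    (x : Fin n → ℝ) (hx : ∀ i, 0 ≤ x i) (hsum : ∑ i, x i = (n : ℝ)) :
    (1 / (n : ℝ)) * (∑ ℓ, ((∑ i ∈ Finset.univ.erase ℓ,
        f i ((1 - 1 / (n : ℝ)) * x i + (1 / (n : ℝ)) * x ℓ)) + g 1))
      - ∑ i, f i (x i)
      ≤ 5 / 2 * β - 3 / 2 * α := by
  have hβ : 0 < β := lt_of_lt_of_le hα hαβ
  set N : ℝ := (n : ℝ) with hNdef
  have hN2 : (2 : ℝ) ≤ N := by rw [hNdef]; exact_mod_cast hn
  have hN0 : 0 < N := by linarith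
  have hNne : N ≠ 0 := ne_of_gt hN0
  set d : Fin n → ℝ := fun i => deriv (f i) (x i) with hd
  set A : ℝ := ∑ i, f i (x i) with hA
  set S2 : ℝ := ∑ i, (x i) ^ 2 with hS2
  set D0 : ℝ := ∑ i, d i with hD0
  set D1 : ℝ := ∑ i, d i * x i with hD1
  -- basic scalar facts
  have hderiv0 : ∀ i, deriv (f i) 0 = 0 := fun i => (hf i).2.2.2.2
  have hf0 : ∀ i, f i 0 = 0 := fun i => (hf i).2.2.2.1
  have habs : ∀ i, |d i| ≤ β * x i := by
    intro i
    have h1 := (hf i).2.2.1 (x i) 0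
    rw [hderiv0 i, sub_zero, sub_zero, abs_of_nonneg (hx i)] at h1
    exact h1
  have hdub : ∀ i, d i ≤ β * x i := fun i => le_trans (le_abs_self _) (habs i)
  have hdxlb : ∀ i, α * (x i) ^ 2 ≤ d i * x i := by
    intro i
    have h1 := (hf i).strong (x i) 0
    rw [hf0 i] at h1
    have h2 := (hf i).strong 0 (x i)
    rw [hf0 i, hderiv0 i] at h2
    nlinarith [h1, h2]
  have hflb : ∀ i, α / 2 * (x i) ^ 2 ≤ f i (x i) := by
    intro i
    have h2 := (hf i).strong 0 (x i)
    rw [hf0 i, hderiv0 i] at h2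
    nlinarith [h2]
  have hg1 : g 1 ≤ β / 2 := by
    have h1 := hg.smooth 0 1
    rw [hg.2.2.2.1, hg.2.2.2.2] at h1
    nlinarith [h1]
  -- the quadratic upper bound with explicit form
  set B : Fin n → Fin n → ℝ := fun ℓ i =>
    f i (x i) + d i * ((x ℓ - x i) / N) + β / 2 * ((x ℓ - x i) / N) ^ 2 with hB
  have key : ∀ ℓ : Fin n,
      (∑ i ∈ Finset.univ.erase ℓ,
        f i ((1 - 1 / N) * x i + (1 / N) * x ℓ)) + g 1
      ≤ (∑ i, B ℓ i) - f ℓ (x ℓ) + β / 2 := by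
    intro ℓ
    have h1 : ∀ i ∈ Finset.univ.erase ℓ,
        f i ((1 - 1 / N) * x i + (1 / N) * x ℓ) ≤ B ℓ i := by
      intro i _
      have hy : (1 - 1 / N) * x i + (1 / N) * x ℓ = x i + (x ℓ - x i) / N := by
        field_simp; ring
      rw [hy]
      have := (hf i).smooth (x i) (x i + (x ℓ - x i) / N)
      simpa [hB] using this
    have h2 : ∑ i ∈ Finset.univ.erase ℓ, B ℓ i = (∑ i, B ℓ i) - B ℓ ℓ :=
      Finset.sum_erase_eq_sub (Finset.mem_univ ℓ)
    have h3 : B ℓ ℓ = f ℓ (x ℓ) := by simp [hB]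
    calc (∑ i ∈ Finset.univ.erase ℓ,
          f i ((1 - 1 / N) * x i + (1 / N) * x ℓ)) + g 1
        ≤ (∑ i ∈ Finset.univ.erase ℓ, B ℓ i) + β / 2 :=
          add_le_add (Finset.sum_le_sum h1) hg1
      _ = (∑ i, B ℓ i) - f ℓ (x ℓ) + β / 2 := by rw [h2, h3]
  -- closed form of the inner sum
  have hBsum : ∀ ℓ : Fin n, ∑ i, B ℓ i
      = A + (x ℓ * D0 - D1) * (1 / N)
        + (N * (x ℓ) ^ 2 - 2 * (x ℓ) * N + S2) * (β / (2 * N ^ 2)) := by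
    intro ℓ
    have e : ∀ i : Fin n, B ℓ i
        = f i (x i) + (x ℓ * d i - d i * x i) * (1 / N)
          + ((x ℓ) ^ 2 - 2 * (x ℓ) * (x i) + (x i) ^ 2) * (β / (2 * N ^ 2)) := by
      intro i
      simp only [hB]
      field_simp
      ring
    rw [Finset.sum_congr rfl (fun i _ => e i)]
    rw [Finset.sum_add_distrib, Finset.sum_add_distrib]
    congr 1
    · congr 1
      rw [← Finset.sum_mul]
      congr 1
      rw [Finset.sum_sub_distrib, ← Finset.mul_sum]
    · rw [← Finset.sum_mul]
      congr 1
      rw [Finset.sum_add_distrib, Finset.sum_sub_distrib, Finset.sum_const,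
        Finset.card_univ, Fintype.card_fin, ← Finset.mul_sum, hsum]
      simp only [nsmul_eq_mul, ← hNdef, ← hS2]
      all_goals ring
  -- sum over ℓ
  have houter : ∑ ℓ, ((∑ i, B ℓ i) - f ℓ (x ℓ) + β / 2)
      = N * A + (D0 - D1) + (β * S2 / N - β) - A + N * (β / 2) := by
    rw [Finset.sum_add_distrib, Finset.sum_sub_distrib,
      Finset.sum_congr rfl (fun ℓ _ => hBsum ℓ)]
    rw [Finset.sum_add_distrib, Finset.sum_add_distrib, Finset.sum_const,
      Finset.card_univ, Fintype.card_fin]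
    have e1 : ∑ ℓ, (x ℓ * D0 - D1) * (1 / N) = (N * D0 - N * D1) * (1 / N) := by
      rw [← Finset.sum_mul]
      congr 1
      rw [Finset.sum_sub_distrib, Finset.sum_const, Finset.card_univ, Fintype.card_fin,
        ← Finset.sum_mul, hsum]
      simp only [nsmul_eq_mul, ← hNdef]
      all_goals ring
    have e2 : ∑ ℓ, (N * (x ℓ) ^ 2 - 2 * (x ℓ) * N + S2) * (β / (2 * N ^ 2))
        = (N * S2 - 2 * N * N + N * S2) * (β / (2 * N ^ 2)) := by
      rw [← Finset.sum_mul]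
      congr 1
      rw [Finset.sum_add_distrib, Finset.sum_sub_distrib, Finset.sum_const,
        Finset.card_univ, Fintype.card_fin, ← Finset.mul_sum]
      have e3 : ∑ ℓ, 2 * x ℓ * N = 2 * N * N := by
        rw [← Finset.sum_mul, ← Finset.mul_sum, hsum]
      rw [e3]
      simp only [nsmul_eq_mul, ← hNdef, ← hS2]
      all_goals ring
    rw [e1, e2]
    simp only [Finset.sum_const, Finset.card_univ, Fintype.card_fin, nsmul_eq_mul, ← hNdef, ← hA]
    field_simp
    ring
  -- put it together
  have hT : ∑ ℓ, ((∑ i ∈ Finset.univ.erase ℓ,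
        f i ((1 - 1 / N) * x i + (1 / N) * x ℓ)) + g 1)
      ≤ N * A + (D0 - D1) + (β * S2 / N - β) - A + N * (β / 2) := by
    rw [← houter]
    exact Finset.sum_le_sum fun ℓ _ => key ℓ
  -- global bounds on the aggregates
  have hD0ub : D0 ≤ β * N := by
    have := Finset.sum_le_sum (fun i (_ : i ∈ Finset.univ) => hdub i)
    rw [← Finset.mul_sum, hsum] at this
    exact this
  have hD1lb : α * S2 ≤ D1 := by
    have := Finset.sum_le_sum (fun i (_ : i ∈ Finset.univ) => hdxlb i)
    rw [← Finset.mul_sum] at this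
    exact this
  have hAlb : α / 2 * S2 ≤ A := by
    have := Finset.sum_le_sum (fun i (_ : i ∈ Finset.univ) => hflb i)
    rw [← Finset.mul_sum] at this
    exact this
  have hS2lb : N ≤ S2 := by
    have h1 : ∀ i ∈ Finset.univ, 2 * x i - 1 ≤ (x i : ℝ) ^ 2 := by
      intro i _; nlinarith [sq_nonneg (x i - 1)]
    have h2 := Finset.sum_le_sum h1
    rw [Finset.sum_sub_distrib, ← Finset.mul_sum, hsum, Finset.sum_const,
      Finset.card_univ, Fintype.card_fin] at h2
    simp only [nsmul_eq_mul, mul_one, ← hNdef] at h2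
    rw [← hS2] at h2
    linarith
  have hxub : ∀ i, x i ≤ N := by
    intro i
    have h1 : x i ≤ ∑ j, x j :=
      Finset.single_le_sum (fun j _ => hx j) (Finset.mem_univ i)
    rwa [hsum] at h1
  have hS2ub : S2 ≤ N * N := by
    have h1 : ∀ i ∈ Finset.univ, (x i : ℝ) ^ 2 ≤ N * x i := by
      intro i _
      have := mul_le_mul_of_nonneg_right (hxub i) (hx i)
      nlinarith [this]
    have h2 := Finset.sum_le_sum h1
    rw [← Finset.mul_sum, hsum] at h2
    linarith
  -- conclude
  clear_value A S2 D0 D1 B d N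
  have hfin : N * A + (D0 - D1) + (β * S2 / N - β) - A + N * (β / 2)
      ≤ N * (5 / 2 * β - 3 / 2 * α + A) := by
    clear key hBsum houter hT hB hsum hx hf hdub habs hdxlb hflb hxub hf0 hderiv0 hg1 hg
    have hdiv : β * S2 / N ≤ β * N := by
      rw [div_le_iff₀ hN0]
      calc β * S2 ≤ β * (N * N) := mul_le_mul_of_nonneg_left hS2ub hβ.le
        _ = β * N * N := by ring
    have hαS2 : α * N ≤ α * S2 := mul_le_mul_of_nonneg_left hS2lb hα.le
    have hexp : N * (5 / 2 * β - 3 / 2 * α + A)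
        = 5 / 2 * (β * N) - 3 / 2 * (α * N) + N * A := by ring
    rw [hexp]
    linarith [hD0ub, hD1lb, hAlb, hdiv, hαS2]
  have hfull := hT.trans hfin
  have hmul := mul_le_mul_of_nonneg_left hfull (by positivity : (0:ℝ) ≤ 1 / N)
  calc (1 / N) * (∑ ℓ, ((∑ i ∈ Finset.univ.erase ℓ,
        f i ((1 - 1 / N) * x i + (1 / N) * x ℓ)) + g 1)) - A
      ≤ (1 / N) * (N * (5 / 2 * β - 3 / 2 * α + A)) - A := by linarith
    _ = 5 / 2 * β - 3 / 2 * α := by field_simp; ring
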